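/- If for some nonzero r ∈ R^a a point w lies on the boundary of the ℓ1-ball K = {u ∈ R^a : ||u||_1 ≤ ||w||_1}, then there exists a scalar α ∈ R such that w + α r still lies in K and has at least one coordinate equal to zero that was not forced, i.e., w + α r has strictly fewer nonzero coordinates than a (more precisely: there exists α with (w + α r)_i = 0 for some index i and ||w + α r||_1 ≤ ||w||_1). -/

import Mathlib

open scoped BigOperators

private lemma l1_helper {a : ℕ} (w r : Fin a → ℝ) (hw : ∀ i, w i ≠ 0) (hr : r ≠ 0)
    (hS : ∑ i, (if 0 < w i then (1:ℝ) else -1) * r i ≤ 0) :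
    ∃ α : ℝ, (∃ i : Fin a, w i + α * r i = 0) ∧
      (∑ i, |w i + α * r i|) ≤ ∑ i, |w i| := by
  set s : Fin a → ℝ := fun i => if 0 < w i then (1:ℝ) else -1 with hs
  have hs_abs : ∀ i, s i * w i = |w i| := by
    intro i
    by_cases h : 0 < w i
    · simp [hs, h, abs_of_pos h]
    · have hneg : w i < 0 := lt_of_le_of_ne (not_lt.mp h) (hw i)
      simp [hs, h, abs_of_neg hneg]
  have hs_nonneg : ∀ i, 0 ≤ w i * r i → 0 ≤ s i * r i := by
    intro i h
    by_cases hpos : 0 < w i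
    · simp only [hs, if_pos hpos]
      nlinarith
    · have hneg : w i < 0 := lt_of_le_of_ne (not_lt.mp hpos) (hw i)
      simp only [hs, if_neg hpos]
      nlinarith
  -- the set of indices where the sign eventually flips in positive direction
  set P : Finset (Fin a) := Finset.univ.filter (fun i => w i * r i < 0) with hPdef
  have hP : P.Nonempty := by
    by_contra hempty
    have hall : ∀ i, 0 ≤ w i * r i := by
      intro i
      by_contra hc
      exact hempty ⟨i, by simp [hPdef, lt_of_not_ge hc]⟩
    obtain ⟨j, hj⟩ : ∃ j, r j ≠ 0 := Function.ne_iff.mp hr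
    have hjpos : 0 < s j * r j := by
      have h1 : 0 ≤ s j * r j := hs_nonneg j (hall j)
      have h2 : s j * r j ≠ 0 := by
        apply mul_ne_zero _ hj
        by_cases hpos : 0 < w j <;> simp [hs, hpos]
      exact lt_of_le_of_ne h1 (Ne.symm h2)
    have : 0 < ∑ i, s i * r i := by
      apply Finset.sum_pos' (fun i _ => hs_nonneg i (hall i)) ⟨j, Finset.mem_univ j, hjpos⟩
    linarith
  obtain ⟨i₀, hi₀P, hmin⟩ := Finset.exists_min_image P (fun i => -w i / r i) hP
  have hi₀ : w i₀ * r i₀ < 0 := by simpa [hPdef] using hi₀P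
  have hri₀ : r i₀ ≠ 0 := by intro h; rw [h] at hi₀; simp at hi₀
  set β : ℝ := -w i₀ / r i₀ with hβ
  have hβpos : 0 < β := by
    rw [hβ, div_pos_iff]
    rcases lt_trichotomy (r i₀) 0 with h | h | h
    · right; constructor <;> nlinarith
    · exact absurd h hri₀
    · left; constructor <;> nlinarith
  have hkey : ∀ i, |w i + β * r i| = |w i| + β * (s i * r i) := by
    intro i
    have hsnn : 0 ≤ s i * (w i + β * r i) := by
      by_cases h : w i * r i < 0
      · have hiP : i ∈ P := by simp [hPdef, h]
        have hle : β ≤ -w i / r i := hmin i hiP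
        have hri : r i ≠ 0 := by intro hc; rw [hc] at h; simp at h
        have hsr : s i * r i < 0 := by
          by_cases hpos : 0 < w i
          · simp only [hs, if_pos hpos]; nlinarith
          · have hneg : w i < 0 := lt_of_le_of_ne (not_lt.mp hpos) (hw i)
            simp only [hs, if_neg hpos]; nlinarith
        have h1 : (-w i / r i) * (s i * r i) ≤ β * (s i * r i) :=
          mul_le_mul_of_nonpos_right hle (le_of_lt hsr)
        have h2 : (-w i / r i) * (s i * r i) = -(s i * w i) := by
          field_simp
        have : s i * (w i + β * r i) = s i * w i + β * (s i * r i) := by ring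
        rw [this, hs_abs]
        rw [h2, hs_abs] at h1
        linarith [abs_nonneg (w i)]
      · have h1 : 0 ≤ s i * r i := hs_nonneg i (not_lt.mp h)
        have : s i * (w i + β * r i) = s i * w i + β * (s i * r i) := by ring
        rw [this, hs_abs]
        have := abs_nonneg (w i)
        nlinarith
    have habs1 : |s i| = 1 := by
      by_cases hpos : 0 < w i <;> simp [hs, hpos]
    have : |w i + β * r i| = s i * (w i + β * r i) := by
      rw [← abs_of_nonneg hsnn, abs_mul, habs1, one_mul]
    rw [this]
    have : s i * (w i + β * r i) = s i * w i + β * (s i * r i) := by ring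
    rw [this, hs_abs]
  refine ⟨β, ⟨i₀, ?_⟩, ?_⟩
  · rw [hβ]; field_simp; ring
  · calc ∑ i, |w i + β * r i| = ∑ i, (|w i| + β * (s i * r i)) := by
          exact Finset.sum_congr rfl (fun i _ => hkey i)
      _ = (∑ i, |w i|) + β * ∑ i, s i * r i := by
          rw [Finset.sum_add_distrib, Finset.mul_sum]
      _ ≤ ∑ i, |w i| := by nlinarith

/-- Geometric step: given any point `w ∈ ℝ^a` and any nonzero direction `r`, there is a
scalar `α` such that `w + α r` stays in the ℓ₁-ball `{u : ‖u‖₁ ≤ ‖w‖₁}` while some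
coordinate of `w + α r` vanishes. -/
theorem l1_ball_translation_kills_coordinate (a : ℕ)
    (w r : Fin a → ℝ) (hr : r ≠ 0) :
    ∃ α : ℝ, (∃ i : Fin a, w i + α * r i = 0) ∧
      (∑ i, |w i + α * r i|) ≤ ∑ i, |w i| := by
  by_cases h0 : ∃ i, w i = 0
  · obtain ⟨i, hi⟩ := h0
    exact ⟨0, ⟨i, by simp [hi]⟩, by simp⟩
  · push_neg at h0
    by_cases hS : ∑ i, (if 0 < w i then (1:ℝ) else -1) * r i ≤ 0
    · exact l1_helper w r h0 hr hS
    · have hr' : (-r) ≠ 0 := neg_ne_zero.mpr hr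
      have hS' : ∑ i, (if 0 < w i then (1:ℝ) else -1) * (-r) i ≤ 0 := by
        push_neg at hS
        have : ∑ i, (if 0 < w i then (1:ℝ) else -1) * (-r) i
            = -∑ i, (if 0 < w i then (1:ℝ) else -1) * r i := by
          rw [← Finset.sum_neg_distrib]
          exact Finset.sum_congr rfl (fun i _ => by by_cases h : 0 < w i <;> simp [h])
        rw [this]; linarith
      obtain ⟨α, ⟨i, hi⟩, hsum⟩ := l1_helper w (-r) h0 hr' hS'
      refine ⟨-α, ⟨i, by simpa using hi⟩, ?_⟩
      have : ∀ j, w j + (-α) * r j = w j + α * (-r) j := fun j => by simp [neg_mul, mul_neg]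
      simpa [this] using hsum
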